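/- Let n and N be positive integers, let R be a real N×n matrix, and let 0 < β² ≤ δ be real numbers such that every nonzero eigenvalue γ of R Rᵀ satisfies β² ≤ γ ≤ δ. Then every eigenvalue λ of the symmetric (n+N)×(n+N) block matrix K = [[Iₙ, −Rᵀ],[−R, 0]] lies in the set [(1−√(1+4δ))/2, (1−√(1+4β²))/2] ∪ {0, 1} ∪ [(1+√(1+4β²))/2, (1+√(1+4δ))/2]. -/
import Mathlib


open Matrix

/-- If every nonzero eigenvalue `γ` of `R Rᵀ` satisfies `β² ≤ γ ≤ δ`
(with `0 < β² ≤ δ`), then every eigenvalue `λ` of `K = [[Iₙ, −Rᵀ],[−R, 0]]` lies in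
`[(1−√(1+4δ))/2, (1−√(1+4β²))/2] ∪ {0, 1} ∪ [(1+√(1+4β²))/2, (1+√(1+4δ))/2]`. -/
theorem block_eigenvalue_localization {n N : ℕ} [NeZero n] [NeZero N]
    (R : Matrix (Fin N) (Fin n) ℝ)
    (β δ : ℝ) (hβ : 0 < β ^ 2) (hβδ : β ^ 2 ≤ δ)
    (hspec : ∀ γ : ℝ, γ ≠ 0 →
      (∃ p : Fin N → ℝ, p ≠ 0 ∧ (R * Rᵀ) *ᵥ p = γ • p) → β ^ 2 ≤ γ ∧ γ ≤ δ)
    (K : Matrix (Fin n ⊕ Fin N) (Fin n ⊕ Fin N) ℝ)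
    (hK : K = Matrix.fromBlocks 1 (-Rᵀ) (-R) 0)
    (lam : ℝ) (x : (Fin n ⊕ Fin N) → ℝ) (hx : x ≠ 0) (hEig : K *ᵥ x = lam • x) :
    lam ∈ Set.Icc ((1 - Real.sqrt (1 + 4 * δ)) / 2) ((1 - Real.sqrt (1 + 4 * β ^ 2)) / 2)
      ∪ ({0, 1} : Set ℝ)
      ∪ Set.Icc ((1 + Real.sqrt (1 + 4 * β ^ 2)) / 2) ((1 + Real.sqrt (1 + 4 * δ)) / 2) := by
  by_cases h0 : lam = 0
  · exact Or.inl (Or.inr (by simp [h0]))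
  by_cases h1 : lam = 1
  · exact Or.inl (Or.inr (by simp [h1]))
  set u : Fin n → ℝ := fun i => x (Sum.inl i) with hu
  set p : Fin N → ℝ := fun j => x (Sum.inr j) with hp
  have hx' : x = Sum.elim u p := by funext i; cases i <;> rfl
  rw [hK, hx'] at hEig
  have hR1 : Rᵀ *ᵥ p = (1 - lam) • u := by
    funext i
    have h := congrFun hEig (Sum.inl i)
    simp [Matrix.fromBlocks_mulVec, Matrix.one_mulVec, Matrix.neg_mulVec] at h
    simp only [Pi.smul_apply, smul_eq_mul]
    linarith
  have hR2 : R *ᵥ u = (-lam) • p := by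
    funext j
    have h := congrFun hEig (Sum.inr j)
    simp [Matrix.fromBlocks_mulVec, Matrix.neg_mulVec] at h
    simp only [Pi.smul_apply, smul_eq_mul]
    linarith
  have hpne : p ≠ 0 := by
    intro hp0
    apply hx
    have hu0 : u = 0 := by
      have h := hR1
      rw [hp0, Matrix.mulVec_zero] at h
      have h1l : (1 : ℝ) - lam ≠ 0 := sub_ne_zero.mpr (Ne.symm h1)
      funext i
      have := congrFun h.symm i
      simp only [Pi.smul_apply, smul_eq_mul, Pi.zero_apply] at this
      exact (mul_eq_zero.mp this).resolve_left h1l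
    rw [hx', hu0, hp0]
    funext i; cases i <;> simp
  have key : (R * Rᵀ) *ᵥ p = (lam ^ 2 - lam) • p := by
    rw [← Matrix.mulVec_mulVec, hR1, Matrix.mulVec_smul, hR2, smul_smul]
    congr 1
    ring
  have hγ : lam ^ 2 - lam ≠ 0 := by
    intro h
    have h' : lam * (lam - 1) = 0 := by linear_combination h
    rcases mul_eq_zero.mp h' with h'' | h''
    · exact h0 h''
    · exact h1 (by linarith)
  obtain ⟨hlo, hhi⟩ := hspec (lam ^ 2 - lam) hγ ⟨p, hpne, key⟩
  have ha2 : Real.sqrt (1 + 4 * β ^ 2) ^ 2 = 1 + 4 * β ^ 2 :=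
    Real.sq_sqrt (by positivity)
  have hb2 : Real.sqrt (1 + 4 * δ) ^ 2 = 1 + 4 * δ :=
    Real.sq_sqrt (by nlinarith)
  have ha0 := Real.sqrt_nonneg (1 + 4 * β ^ 2)
  have hb0 := Real.sqrt_nonneg (1 + 4 * δ)
  by_cases hs : 0 ≤ 2 * lam - 1
  · right
    constructor
    · have : Real.sqrt (1 + 4 * β ^ 2) ≤ 2 * lam - 1 := by
        calc Real.sqrt (1 + 4 * β ^ 2) ≤ Real.sqrt ((2 * lam - 1) ^ 2) :=
              Real.sqrt_le_sqrt (by nlinarith)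
          _ = 2 * lam - 1 := Real.sqrt_sq hs
      linarith
    · have : 2 * lam - 1 ≤ Real.sqrt (1 + 4 * δ) := by
        calc 2 * lam - 1 = Real.sqrt ((2 * lam - 1) ^ 2) := (Real.sqrt_sq hs).symm
          _ ≤ Real.sqrt (1 + 4 * δ) := Real.sqrt_le_sqrt (by nlinarith)
      linarith
  · left; left
    push_neg at hs
    have hs' : 0 ≤ 1 - 2 * lam := by linarith
    constructor
    · have : 1 - 2 * lam ≤ Real.sqrt (1 + 4 * δ) := by
        calc 1 - 2 * lam = Real.sqrt ((1 - 2 * lam) ^ 2) := (Real.sqrt_sq hs').symm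
          _ ≤ Real.sqrt (1 + 4 * δ) := Real.sqrt_le_sqrt (by nlinarith)
      linarith
    · have : Real.sqrt (1 + 4 * β ^ 2) ≤ 1 - 2 * lam := by
        calc Real.sqrt (1 + 4 * β ^ 2) ≤ Real.sqrt ((1 - 2 * lam) ^ 2) :=
              Real.sqrt_le_sqrt (by nlinarith)
          _ = 1 - 2 * lam := Real.sqrt_sq hs'
      linarith
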